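/- For the repetition scenario where all n estimates q_1,...,q_n ∈ (0,1) concern the same event, the coherent minimizer of Σ_i f(p, q_i) over p ∈ [0,1], with f(p,q) = p ln(p/q) + (1−p) ln((1−p)/(1−q)), is the unique p* satisfying p*/(1−p*) = (Π_i q_i/(1−q_i))^{1/n}. -/

import Mathlib

open scoped BigOperators

/-- Binary KL divergence `f(p,q) = p ln(p/q) + (1−p) ln((1−p)/(1−q))`. -/
noncomputable def binKL (p q : ℝ) : ℝ :=
  p * Real.log (p / q) + (1 - p) * Real.log ((1 - p) / (1 - q))

lemma binKL_pos {p q : ℝ} (hq : q ∈ Set.Ioo (0:ℝ) 1) (hp : p ∈ Set.Icc (0:ℝ) 1)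
    (hne : p ≠ q) : 0 < binKL p q := by
  obtain ⟨hq0, hq1⟩ := hq
  obtain ⟨hp0, hp1⟩ := hp
  have h1q : (0:ℝ) < 1 - q := by linarith
  rcases eq_or_lt_of_le hp0 with h0 | hp0'
  · -- p = 0
    subst h0
    unfold binKL
    have : Real.log (1 - q) < 0 := Real.log_neg h1q (by linarith)
    simp [Real.log_div one_ne_zero h1q.ne']
    linarith
  rcases eq_or_lt_of_le hp1 with h1 | hp1'
  · -- p = 1
    rw [h1]
    unfold binKL
    have : Real.log q < 0 := Real.log_neg hq0 hq1
    simp [Real.log_div one_ne_zero hq0.ne']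
    linarith
  · have h1p : (0:ℝ) < 1 - p := by linarith
    have hA : p * Real.log (q / p) < q - p := by
      have h := Real.log_lt_sub_one_of_pos (div_pos hq0 hp0') (by
        intro h
        exact hne ((div_eq_one_iff_eq hp0'.ne').mp h).symm)
      have := mul_lt_mul_of_pos_left h hp0'
      have e : p * (q / p - 1) = q - p := by field_simp
      linarith [e ▸ this]
    have hB : (1 - p) * Real.log ((1 - q) / (1 - p)) < p - q := by
      have h := Real.log_lt_sub_one_of_pos (div_pos h1q h1p) (by
        intro h
        exact hne (by
          have := (div_eq_one_iff_eq h1p.ne').mp h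
          linarith))
      have := mul_lt_mul_of_pos_left h h1p
      have e : (1 - p) * ((1 - q) / (1 - p) - 1) = p - q := by field_simp; ring
      linarith [e ▸ this]
    unfold binKL
    have e1 : Real.log (p / q) = - Real.log (q / p) := by
      rw [Real.log_div hp0'.ne' hq0.ne', Real.log_div hq0.ne' hp0'.ne']; ring
    have e2 : Real.log ((1 - p) / (1 - q)) = - Real.log ((1 - q) / (1 - p)) := by
      rw [Real.log_div h1p.ne' h1q.ne', Real.log_div h1q.ne' h1p.ne']; ring
    rw [e1, e2]
    nlinarith

/-- in the repetition scenario (all estimates `q_i ∈ (0,1)` concern the same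
event), the minimizer over `p ∈ [0,1]` of `Σ f(p, q_i)` satisfies
`p*/(1−p*) = (Π q_i/(1−q_i))^{1/n}`. -/
theorem binKL_repetition_minimizer_geometric_mean_odds
    {n : ℕ} (hn : 0 < n) (q : Fin n → ℝ) (hq : ∀ i, q i ∈ Set.Ioo (0:ℝ) 1)
    (pstar : ℝ) (hmem : pstar ∈ Set.Icc (0:ℝ) 1)
    (hmin : IsMinOn (fun p : ℝ => ∑ i, binKL p (q i)) (Set.Icc (0:ℝ) 1) pstar) :
    pstar / (1 - pstar) = (∏ i, q i / (1 - q i)) ^ ((n : ℝ)⁻¹) := by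
  have hq0 : ∀ i, (0:ℝ) < q i := fun i => (hq i).1
  have hq1 : ∀ i, q i < 1 := fun i => (hq i).2
  have h1q : ∀ i, (0:ℝ) < 1 - q i := fun i => by linarith [hq1 i]
  set S1 := ∑ i, Real.log (q i) with hS1
  set S2 := ∑ i, Real.log (1 - q i) with hS2
  have hprodpos : (0:ℝ) < ∏ i, q i / (1 - q i) :=
    Finset.prod_pos fun i _ => div_pos (hq0 i) (h1q i)
  set G := (∏ i, q i / (1 - q i)) ^ ((n : ℝ)⁻¹) with hG
  have hGpos : 0 < G := Real.rpow_pos_of_pos hprodpos _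
  set p0 := G / (1 + G) with hp0def
  have h1G : (0:ℝ) < 1 + G := by linarith
  have hp0mem : p0 ∈ Set.Ioo (0:ℝ) 1 := by
    constructor
    · exact div_pos hGpos h1G
    · rw [div_lt_one h1G]; linarith
  have h1p0 : 1 - p0 = 1 / (1 + G) := by
    rw [hp0def, eq_div_iff h1G.ne', sub_mul, div_mul_cancel₀ _ h1G.ne']; ring
  have h1p0pos : (0:ℝ) < 1 - p0 := by rw [h1p0]; positivity
  have hodds : p0 / (1 - p0) = G := by
    rw [h1p0, hp0def]; field_simp
  have hnR : (0:ℝ) < (n:ℝ) := Nat.cast_pos.mpr hn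
  have hlogG : Real.log G = (S1 - S2) / n := by
    rw [hG, Real.log_rpow hprodpos, Real.log_prod (fun i _ => (div_pos (hq0 i) (h1q i)).ne')]
    rw [hS1, hS2]
    rw [← Finset.sum_sub_distrib]
    rw [Finset.sum_congr rfl (fun i _ => Real.log_div (hq0 i).ne' (h1q i).ne')]
    ring
  have key : (n:ℝ) * Real.log p0 - S1 = (n:ℝ) * Real.log (1 - p0) - S2 := by
    have : Real.log p0 - Real.log (1 - p0) = Real.log G := by
      rw [← hodds, Real.log_div hp0mem.1.ne' h1p0pos.ne']
    rw [hlogG] at this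
    field_simp at this
    linarith
  -- value of the objective on (0,1)
  have Fval : ∀ p : ℝ, p ∈ Set.Ioo (0:ℝ) 1 →
      ∑ i, binKL p (q i)
        = n * (p * Real.log p + (1 - p) * Real.log (1 - p)) - p * S1 - (1 - p) * S2 := by
    intro p hp
    have hppos : (0:ℝ) < p := hp.1
    have h1ppos : (0:ℝ) < 1 - p := by linarith [hp.2]
    have : ∀ i : Fin n, binKL p (q i)
        = (p * Real.log p + (1 - p) * Real.log (1 - p))
          - (p * Real.log (q i) + (1 - p) * Real.log (1 - q i)) := by
      intro i
      unfold binKL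
      rw [Real.log_div hppos.ne' (hq0 i).ne', Real.log_div h1ppos.ne' (h1q i).ne']
      ring
    rw [Finset.sum_congr rfl fun i _ => this i, Finset.sum_sub_distrib,
      Finset.sum_const, Finset.card_univ, Fintype.card_fin, Finset.sum_add_distrib,
      ← Finset.mul_sum, ← Finset.mul_sum, ← hS1, ← hS2, nsmul_eq_mul]
    ring
  set c := (n:ℝ) * Real.log p0 - S1 with hc
  have Fp0 : ∑ i, binKL p0 (q i) = c := by
    rw [Fval p0 hp0mem]
    have k2 : (n:ℝ) * Real.log (1 - p0) - S2 = c := key.symm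
    linear_combination (1 - p0) * k2 - p0 * hc
  have hdiff : ∑ i, binKL pstar (q i) - ∑ i, binKL p0 (q i)
      = n * binKL pstar p0 := by
    rw [Fp0]
    rcases eq_or_lt_of_le hmem.1 with h0 | hps0
    · -- pstar = 0
      have hsum : ∑ i, binKL pstar (q i) = -S2 := by
        rw [← h0, hS2, ← Finset.sum_neg_distrib]
        refine Finset.sum_congr rfl fun i _ => ?_
        unfold binKL
        norm_num [Real.log_div one_ne_zero (h1q i).ne']
      have hb : binKL pstar p0 = - Real.log (1 - p0) := by
        rw [← h0]
        unfold binKL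
        norm_num [Real.log_div one_ne_zero h1p0pos.ne']
      rw [hsum, hb]
      have k2 : (n:ℝ) * Real.log (1 - p0) - S2 = c := key.symm
      linarith
    rcases eq_or_lt_of_le hmem.2 with h1 | hps1
    · -- pstar = 1
      have hsum : ∑ i, binKL pstar (q i) = -S1 := by
        rw [h1, hS1, ← Finset.sum_neg_distrib]
        refine Finset.sum_congr rfl fun i _ => ?_
        unfold binKL
        norm_num [Real.log_div one_ne_zero (hq0 i).ne']
      have hb : binKL pstar p0 = - Real.log p0 := by
        rw [h1]
        unfold binKL
        norm_num [Real.log_div one_ne_zero hp0mem.1.ne']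
      rw [hsum, hb]
      linarith [hc]
    · -- pstar ∈ (0,1)
      have h1ps : (0:ℝ) < 1 - pstar := by linarith
      rw [Fval pstar ⟨hps0, hps1⟩]
      have hb : binKL pstar p0
          = pstar * (Real.log pstar - Real.log p0)
            + (1 - pstar) * (Real.log (1 - pstar) - Real.log (1 - p0)) := by
        unfold binKL
        rw [Real.log_div hps0.ne' hp0mem.1.ne', Real.log_div h1ps.ne' h1p0pos.ne']
      rw [hb]
      have k2 : (n:ℝ) * Real.log (1 - p0) - S2 = c := key.symm
      linear_combination (1 - pstar) * k2 - pstar * hc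
  have hle : ∑ i, binKL pstar (q i) ≤ ∑ i, binKL p0 (q i) :=
    isMinOn_iff.mp hmin p0 ⟨hp0mem.1.le, hp0mem.2.le⟩
  have hkl : binKL pstar p0 ≤ 0 := by
    nlinarith [hdiff, hle]
  have heq : pstar = p0 := by
    by_contra hne
    exact absurd hkl (not_le.mpr (binKL_pos hp0mem hmem hne))
  rw [heq]
  exact hodds
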